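/- Let L = (ℓ_j)_{j≥1} be a fractal string of Minkowski dimension D ∈ (0,1). Then L is Minkowski measurable if and only if there exists a constant Λ ∈ (0,∞) such that ℓ_j · j^{1/D} → Λ as j → ∞. In that case the Minkowski content of L is M = 2^{1−D} Λ^D / (1−D). -/

import Mathlib

open Filter Topology

/-- A fractal string: a nonincreasing, positive, summable sequence of lengths
`ℓ 0 ≥ ℓ 1 ≥ ⋯ > 0` (indexed from `0`, representing `ℓ_1, ℓ_2, …`). -/
def IsFractalString (ℓ : ℕ → ℝ) : Prop :=
  (∀ j, 0 < ℓ j) ∧ Antitone ℓ ∧ Summable ℓ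

/-- The volume `V(ε) = ∑ⱼ min(ℓⱼ, 2ε)` of the inner ε-neighborhood of the boundary. -/
noncomputable def stringVol (ℓ : ℕ → ℝ) (ε : ℝ) : ℝ :=
  ∑' j, min (ℓ j) (2 * ε)

/-- Upper `d`-dimensional Minkowski content `limsup_{ε→0⁺} V(ε)/ε^{1-d}`. -/
noncomputable def upperContent (ℓ : ℕ → ℝ) (d : ℝ) : ENNReal :=
  Filter.limsup (fun ε : ℝ => ENNReal.ofReal (stringVol ℓ ε / ε ^ (1 - d))) (𝓝[>] 0)

/-- Lower `d`-dimensional Minkowski content `liminf_{ε→0⁺} V(ε)/ε^{1-d}`. -/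
noncomputable def lowerContent (ℓ : ℕ → ℝ) (d : ℝ) : ENNReal :=
  Filter.liminf (fun ε : ℝ => ENNReal.ofReal (stringVol ℓ ε / ε ^ (1 - d))) (𝓝[>] 0)

/-- The Minkowski dimension `D = inf {d ≥ 0 : M*_d < ∞}`. -/
noncomputable def minkDim (ℓ : ℕ → ℝ) : ℝ :=
  sInf {d : ℝ | 0 ≤ d ∧ upperContent ℓ d < ⊤}

/-- The spectral (frequency) counting function `N_ν(x) = ∑ⱼ ⌊ℓⱼ x⌋`. -/
noncomputable def spectralCount (ℓ : ℕ → ℝ) (x : ℝ) : ℝ :=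
  ∑' j, (⌊ℓ j * x⌋₊ : ℝ)

/-- The Weyl term `W(x) = (∑ⱼ ℓⱼ) x`. -/
noncomputable def weylTerm (ℓ : ℕ → ℝ) (x : ℝ) : ℝ :=
  (∑' j, ℓ j) * x

/-- The geometric counting function `N_L(x) = #{j ≥ 1 : ℓⱼ⁻¹ ≤ x}`. -/
noncomputable def geomCount (ℓ : ℕ → ℝ) (x : ℝ) : ℝ :=
  (({j : ℕ | (ℓ j)⁻¹ ≤ x}).ncard : ℝ)

/-- The "asymptotic second term" `φ_ν(x) = W(x) - N_ν(x)`. -/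
noncomputable def phiNu (ℓ : ℕ → ℝ) (x : ℝ) : ℝ :=
  weylTerm ℓ x - spectralCount ℓ x

/-- `L` is Minkowski measurable (in dimension `D`) with Minkowski content `M`:
`V(ε)/ε^{1-D} → M` as `ε → 0⁺`. -/
def MinkMeasurableWith (ℓ : ℕ → ℝ) (D M : ℝ) : Prop :=
  Tendsto (fun ε : ℝ => stringVol ℓ ε / ε ^ (1 - D)) (𝓝[>] (0:ℝ)) (𝓝 M)

/-- `L` is Minkowski measurable in dimension `D` (with some positive finite content). -/
def MinkMeasurable (ℓ : ℕ → ℝ) (D : ℝ) : Prop :=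
  ∃ M : ℝ, 0 < M ∧ MinkMeasurableWith ℓ D M

/-- Hypothesis (6.1): `N_ν(x) = W(x) - C x^D + o(x^D)` as `x → +∞`. -/
def SpectralAsymp (ℓ : ℕ → ℝ) (D C : ℝ) : Prop :=
  Tendsto (fun x : ℝ => (spectralCount ℓ x - (weylTerm ℓ x - C * x ^ D)) / x ^ D)
    atTop (𝓝 0)

/-- The inverse spectral problem `(ISP)_D`: every fractal string of Minkowski
dimension `D` satisfying (6.1) is Minkowski measurable. -/
def ISP (D : ℝ) : Prop :=
  ∀ ℓ : ℕ → ℝ, IsFractalString ℓ → minkDim ℓ = D →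
    (∃ C : ℝ, C ≠ 0 ∧ SpectralAsymp ℓ D C) → MinkMeasurable ℓ D


variable {ℓ : ℕ → ℝ}

/-- index of first term below `t` -/
noncomputable def nnFS (ℓ : ℕ → ℝ) (t : ℝ) : ℕ := sInf {j | ℓ j < t}

lemma fs_tendsto_zero (h : IsFractalString ℓ) : Tendsto ℓ atTop (𝓝 0) :=
  h.2.2.tendsto_atTop_zero

lemma nnFS_nonempty (h : IsFractalString ℓ) {t : ℝ} (ht : 0 < t) :
    {j | ℓ j < t}.Nonempty := by
  obtain ⟨j, hj⟩ := ((fs_tendsto_zero h).eventually (eventually_lt_nhds ht)).exists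
  exact ⟨j, hj⟩

lemma nnFS_lt (h : IsFractalString ℓ) {t : ℝ} (ht : 0 < t) : ℓ (nnFS ℓ t) < t :=
  Nat.sInf_mem (nnFS_nonempty h ht)

lemma nnFS_le {t : ℝ} {j : ℕ} (hj : j < nnFS ℓ t) : t ≤ ℓ j :=
  le_of_not_gt (Nat.notMem_of_lt_sInf hj)

lemma nnFS_lt_of_le (h : IsFractalString ℓ) {t : ℝ} (ht : 0 < t) {j : ℕ}
    (hj : nnFS ℓ t ≤ j) : ℓ j < t :=
  lt_of_le_of_lt (h.2.1 hj) (nnFS_lt h ht)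

lemma nnFS_anti (h : IsFractalString ℓ) {t t' : ℝ} (ht : 0 < t) (htt : t ≤ t') :
    nnFS ℓ t' ≤ nnFS ℓ t :=
  Nat.sInf_le (lt_of_lt_of_le (nnFS_lt h ht) htt)

lemma nnFS_tendsto (h : IsFractalString ℓ) :
    Tendsto (fun t => nnFS ℓ t) (𝓝[>] (0:ℝ)) atTop := by
  rw [tendsto_atTop]
  intro k
  filter_upwards [Ioo_mem_nhdsGT (h.1 k) , self_mem_nhdsWithin] with t ht ht0
  by_contra hc
  push_neg at hc
  exact absurd (nnFS_lt_of_le h ht0 hc.le) (not_lt.2 ht.2.le)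

lemma fs_tendsto_zero' (h : IsFractalString ℓ) : Tendsto ℓ atTop (𝓝[>] 0) := by
  refine tendsto_nhdsWithin_iff.2 ⟨fs_tendsto_zero h, Eventually.of_forall fun j => h.1 j⟩

lemma summable_min (h : IsFractalString ℓ) {c : ℝ} (hc : 0 ≤ c) :
    Summable (fun j => min (ℓ j) c) :=
  Summable.of_nonneg_of_le (fun j => le_min (h.1 j).le hc)
    (fun j => min_le_left _ _) h.2.2

lemma vol_eq (h : IsFractalString ℓ) {ε : ℝ} (hε : 0 < ε) :
    stringVol ℓ ε
      = 2 * ε * (nnFS ℓ (2*ε) : ℝ) + ∑' j, ℓ (j + nnFS ℓ (2*ε)) := by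
  have h2ε : (0:ℝ) < 2*ε := by linarith
  have hs := summable_min h h2ε.le (ℓ := ℓ)
  set N := nnFS ℓ (2*ε) with hN
  have := Summable.sum_add_tsum_nat_add N hs
  have h1 : ∑ i ∈ Finset.range N, min (ℓ i) (2*ε) = 2 * ε * (N:ℝ) := by
    rw [Finset.sum_congr rfl (fun i hi => min_eq_right (nnFS_le (Finset.mem_range.1 hi)))]
    rw [Finset.sum_const, Finset.card_range, nsmul_eq_mul]; ring
  have h2 : (∑' (i : ℕ), min (ℓ (i + N)) (2*ε)) = ∑' j, ℓ (j + N) :=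
    tsum_congr fun i => min_eq_left (nnFS_lt_of_le h h2ε (Nat.le_add_left _ _)).le
  rw [stringVol, ← this, h1, h2]

lemma telescope_hasSum {f : ℕ → ℝ} (hf : Antitone f) (h0 : Tendsto f atTop (𝓝 0)) :
    HasSum (fun j => f j - f (j+1)) (f 0) := by
  rw [hasSum_iff_tendsto_nat_of_nonneg (fun i => sub_nonneg.2 (hf (Nat.le_succ i)))]
  have : ∀ n, ∑ i ∈ Finset.range n, (f i - f (i+1)) = f 0 - f n := by
    intro n; exact Finset.sum_range_sub' f n
  simp_rw [this]
  simpa using tendsto_const_nhds.sub h0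

lemma rpow_slope_bound {p : ℝ} (hp : 1 < p) {x : ℝ} (hx : 0 < x) :
    (p-1) * (x+1) ^ (-p) ≤ x ^ (1-p) - (x+1) ^ (1-p) ∧
    x ^ (1-p) - (x+1) ^ (1-p) ≤ (p-1) * x ^ (-p) := by
  have hx1 : x < x + 1 := by linarith
  obtain ⟨c, hc, hceq⟩ := exists_hasDerivAt_eq_slope (fun y => y ^ (1-p))
    (fun y => (1-p) * y ^ (-p)) hx1
    (by
      apply ContinuousOn.rpow_const continuousOn_id
      intro y hy
      exact Or.inl (ne_of_gt (lt_of_lt_of_le hx hy.1)))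
    (by
      intro y hy
      have hy0 : y ≠ 0 := ne_of_gt (lt_trans hx hy.1)
      have := Real.hasDerivAt_rpow_const (p := 1-p) (Or.inl hy0)
      convert this using 1
      ring_nf)
  have hc0 : 0 < c := lt_trans hx hc.1
  have heq : x ^ (1-p) - (x+1) ^ (1-p) = (p-1) * c ^ (-p) := by
    have : (1-p) * c ^ (-p) = ((x+1) ^ (1-p) - x ^ (1-p)) / (x + 1 - x) := hceq
    simp only [add_sub_cancel_left, div_one] at this
    linarith
  constructor
  · rw [heq]
    have : (x+1) ^ (-p) ≤ c ^ (-p) :=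
      Real.rpow_le_rpow_of_nonpos hc0 hc.2.le (by linarith)
    nlinarith
  · rw [heq]
    have : c ^ (-p) ≤ x ^ (-p) :=
      Real.rpow_le_rpow_of_nonpos hx hc.1.le (by linarith)
    nlinarith

lemma summable_shift_rpow {p : ℝ} (hp : 1 < p) (m : ℕ) :
    Summable (fun j : ℕ => ((j:ℝ) + (m:ℝ) + 1) ^ (-p)) := by
  have h1 : Summable (fun n : ℕ => (n:ℝ) ^ (-p)) :=
    Real.summable_nat_rpow.2 (by linarith)
  have h2 := (summable_nat_add_iff (m+1)).2 h1
  refine h2.congr fun j => ?_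
  push_cast
  ring_nf

lemma shift_rpow_antitone {p : ℝ} (hp : 1 < p) {a : ℝ} (ha : 0 < a) :
    Antitone (fun j : ℕ => ((j:ℝ) + a) ^ (1-p)) := by
  intro i j hij
  exact Real.rpow_le_rpow_of_nonpos (by positivity)
    (by have : (i:ℝ) ≤ j := Nat.cast_le.2 hij; linarith) (by linarith)

lemma shift_rpow_tendsto_zero {p : ℝ} (hp : 1 < p) (a : ℝ) :
    Tendsto (fun j : ℕ => ((j:ℝ) + a) ^ (1-p)) atTop (𝓝 0) := by
  have h1 : Tendsto (fun j : ℕ => (j:ℝ) + a) atTop atTop :=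
    tendsto_atTop_add_const_right _ _ tendsto_natCast_atTop_atTop
  have h2 : Tendsto (fun x : ℝ => x ^ (-(p-1))) atTop (𝓝 0) :=
    tendsto_rpow_neg_atTop (by linarith)
  have := h2.comp h1
  refine this.congr fun j => ?_
  norm_num

lemma tail_rpow_upper {p : ℝ} (hp : 1 < p) {m : ℕ} (hm : 1 ≤ m) :
    ∑' j : ℕ, ((j:ℝ) + (m:ℝ) + 1) ^ (-p) ≤ (m:ℝ) ^ (1-p) / (p-1) := by
  have hm0 : (0:ℝ) < m := by exact_mod_cast hm
  set F : ℕ → ℝ := fun j => ((j:ℝ) + m) ^ (1-p) with hF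
  have htel : HasSum (fun j => (F j - F (j+1)) / (p-1)) (F 0 / (p-1)) :=
    (telescope_hasSum (shift_rpow_antitone hp hm0) (shift_rpow_tendsto_zero hp m)).div_const _
  have hF0 : F 0 = (m:ℝ) ^ (1-p) := by simp [hF]
  calc ∑' j : ℕ, ((j:ℝ) + (m:ℝ) + 1) ^ (-p)
      ≤ ∑' j, (F j - F (j+1)) / (p-1) := by
        refine Summable.tsum_le_tsum (fun j => ?_) (summable_shift_rpow hp m) htel.summable
        have hx : (0:ℝ) < (j:ℝ) + m := by positivity
        have := (rpow_slope_bound hp hx).1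
        rw [le_div_iff₀ (by linarith : (0:ℝ) < p - 1)]
        have hFj : F (j+1) = ((j:ℝ) + m + 1) ^ (1-p) := by
          simp only [hF]; push_cast; ring_nf
        rw [hFj]
        simp only [hF]
        nlinarith [this]
    _ = F 0 / (p-1) := htel.tsum_eq
    _ = (m:ℝ) ^ (1-p) / (p-1) := by rw [hF0]

lemma tail_rpow_lower {p : ℝ} (hp : 1 < p) (m : ℕ) :
    ((m:ℝ) + 1) ^ (1-p) / (p-1) ≤ ∑' j : ℕ, ((j:ℝ) + (m:ℝ) + 1) ^ (-p) := by
  set G : ℕ → ℝ := fun j => ((j:ℝ) + ((m:ℝ)+1)) ^ (1-p) with hG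
  have htel : HasSum (fun j => (G j - G (j+1)) / (p-1)) (G 0 / (p-1)) :=
    (telescope_hasSum (shift_rpow_antitone hp (by positivity))
      (shift_rpow_tendsto_zero hp _)).div_const _
  have hG0 : G 0 = ((m:ℝ)+1) ^ (1-p) := by simp [hG]
  calc ((m:ℝ) + 1) ^ (1-p) / (p-1) = G 0 / (p-1) := by rw [hG0]
    _ = ∑' j, (G j - G (j+1)) / (p-1) := htel.tsum_eq.symm
    _ ≤ ∑' j : ℕ, ((j:ℝ) + (m:ℝ) + 1) ^ (-p) := by
        refine Summable.tsum_le_tsum (fun j => ?_) htel.summable (summable_shift_rpow hp m)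
        have hx : (0:ℝ) < (j:ℝ) + m + 1 := by positivity
        have := (rpow_slope_bound hp hx).2
        rw [div_le_iff₀ (by linarith : (0:ℝ) < p - 1)]
        have hGj : G (j+1) = ((j:ℝ) + m + 1 + 1) ^ (1-p) := by
          simp only [hG]; push_cast; ring_nf
        have hGj0 : G j = ((j:ℝ) + m + 1) ^ (1-p) := by
          simp only [hG]; push_cast; ring_nf
        rw [hGj, hGj0]
        nlinarith [this]

lemma tail_asymp (h : IsFractalString ℓ) {p Λ : ℝ} (hp : 1 < p) (hΛ : 0 < Λ)
    (hl : Tendsto (fun j : ℕ => ℓ j * ((j:ℝ)+1)^p) atTop (𝓝 Λ)) :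
    Tendsto (fun m : ℕ => (∑' j, ℓ (j+m)) * (m:ℝ)^(p-1)) atTop (𝓝 (Λ/(p-1))) := by
  have hp1 : (0:ℝ) < p - 1 := by linarith
  rw [tendsto_order]
  constructor
  · -- lower bound
    intro a ha
    set δ : ℝ := min (Λ/2) ((Λ - (p-1)*a)/2) with hδdef
    have hδ0 : 0 < δ := by
      apply lt_min (by linarith)
      have := (lt_div_iff₀ hp1).1 ha
      nlinarith
    have hδΛ : δ < Λ := lt_of_le_of_lt (min_le_left _ _) (by linarith)
    have hkey : a < (Λ - δ)/(p-1) := by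
      rw [lt_div_iff₀ hp1]
      have h2 : δ ≤ (Λ - (p-1)*a)/2 := min_le_right _ _
      nlinarith
    -- lower estimate on ℓ j
    have hev : ∀ᶠ j : ℕ in atTop, (Λ - δ) * ((j:ℝ)+1)^(-p) ≤ ℓ j := by
      filter_upwards [hl.eventually (eventually_gt_nhds (by linarith : Λ - δ < Λ))] with j hj
      have hjp : (0:ℝ) < ((j:ℝ)+1)^p := by positivity
      rw [Real.rpow_neg (by positivity), mul_inv_le_iff₀ hjp]
      linarith
    obtain ⟨J, hJ⟩ := eventually_atTop.1 hev
    -- the comparison sequence tends to (Λ-δ)/(p-1) > a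
    have hw : Tendsto (fun m : ℕ => (Λ - δ)/(p-1) * ((((m:ℝ)+1))/m)^(1-p)) atTop
        (𝓝 ((Λ - δ)/(p-1))) := by
      have h1 : Tendsto (fun m : ℕ => (((m:ℝ)+1))/m) atTop (𝓝 1) := by
        have := (tendsto_const_nhds (x := (1:ℝ)) (f := atTop (α := ℕ))).add
          tendsto_one_div_atTop_nhds_zero_nat
        simp only [add_zero] at this
        refine this.congr' ?_
        filter_upwards [eventually_gt_atTop 0] with m hm
        have : (m:ℝ) ≠ 0 := Nat.cast_ne_zero.2 hm.ne'
        field_simp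
      have h2 : Tendsto (fun m : ℕ => ((((m:ℝ)+1))/m)^(1-p)) atTop (𝓝 1) := by
        have := (h1.rpow_const (p := 1-p) (Or.inl one_ne_zero))
        simpa using this
      simpa using tendsto_const_nhds.mul h2
    have hwev := hw.eventually (eventually_gt_nhds hkey)
    filter_upwards [hwev, eventually_ge_atTop (max J 1)] with m hm1 hm2
    have hm1' : 1 ≤ m := le_trans (le_max_right J 1) hm2
    have hmJ : J ≤ m := le_trans (le_max_left J 1) hm2
    have hm0 : (0:ℝ) < m := by exact_mod_cast hm1'
    -- tail ≥ (Λ-δ) * Σ (j+m+1)^{-p} ≥ (Λ-δ)(m+1)^{1-p}/(p-1)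
    have hsum1 : Summable (fun j => ℓ (j+m)) := (summable_nat_add_iff m).2 h.2.2
    have hstep : (Λ - δ) * (((m:ℝ)+1)^(1-p)/(p-1)) ≤ ∑' j, ℓ (j+m) := by
      calc (Λ - δ) * (((m:ℝ)+1)^(1-p)/(p-1))
          ≤ (Λ - δ) * ∑' j : ℕ, ((j:ℝ) + (m:ℝ) + 1) ^ (-p) :=
            mul_le_mul_of_nonneg_left (tail_rpow_lower hp m) (by linarith)
        _ = ∑' j : ℕ, (Λ - δ) * ((j:ℝ) + (m:ℝ) + 1) ^ (-p) :=
            ((summable_shift_rpow hp m).tsum_mul_left _).symm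
        _ ≤ ∑' j, ℓ (j+m) := by
            refine Summable.tsum_le_tsum (fun j => ?_) ((summable_shift_rpow hp m).mul_left _) hsum1
            have := hJ (j+m) (le_trans hmJ (Nat.le_add_left _ _))
            convert this using 3
            rfl
            push_cast; ring
    -- now multiply by m^{p-1}
    have hfin : (Λ - δ)/(p-1) * ((((m:ℝ)+1))/m)^(1-p) ≤ (∑' j, ℓ (j+m)) * (m:ℝ)^(p-1) := by
      have hrw : ((((m:ℝ)+1))/m)^(1-p) = ((m:ℝ)+1)^(1-p) * (m:ℝ)^(p-1) := by
        rw [Real.div_rpow (by positivity) hm0.le, div_eq_mul_inv,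
          ← Real.rpow_neg hm0.le, neg_sub]
      have h3 := mul_le_mul_of_nonneg_right hstep
        (by positivity : (0:ℝ) ≤ (m:ℝ)^(p-1))
      calc (Λ - δ)/(p-1) * ((((m:ℝ)+1))/m)^(1-p)
          = (Λ - δ) * (((m:ℝ)+1)^(1-p)/(p-1)) * (m:ℝ)^(p-1) := by rw [hrw]; ring
        _ ≤ (∑' j, ℓ (j+m)) * (m:ℝ)^(p-1) := h3
    linarith [hfin, hm1]
  · -- upper bound
    intro b hb
    set δ : ℝ := ((p-1)*b - Λ)/2 with hδdef
    have hδ0 : 0 < δ := by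
      have := (div_lt_iff₀ hp1).1 hb
      simp only [hδdef]; nlinarith
    have hkey : (Λ + δ)/(p-1) < b := by
      rw [div_lt_iff₀ hp1]
      have := (div_lt_iff₀ hp1).1 hb
      simp only [hδdef]; nlinarith
    have hev : ∀ᶠ j : ℕ in atTop, ℓ j ≤ (Λ + δ) * ((j:ℝ)+1)^(-p) := by
      filter_upwards [hl.eventually (eventually_lt_nhds (by linarith : Λ < Λ + δ))] with j hj
      have hjp : (0:ℝ) < ((j:ℝ)+1)^p := by positivity
      rw [Real.rpow_neg (by positivity), ← div_eq_mul_inv, le_div_iff₀ hjp]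
      linarith
    obtain ⟨J, hJ⟩ := eventually_atTop.1 hev
    filter_upwards [eventually_ge_atTop (max J 1)] with m hm2
    have hm1' : 1 ≤ m := le_trans (le_max_right J 1) hm2
    have hmJ : J ≤ m := le_trans (le_max_left J 1) hm2
    have hm0 : (0:ℝ) < m := by exact_mod_cast hm1'
    have hsum1 : Summable (fun j => ℓ (j+m)) := (summable_nat_add_iff m).2 h.2.2
    have hstep : ∑' j, ℓ (j+m) ≤ (Λ + δ) * ((m:ℝ)^(1-p)/(p-1)) := by
      calc ∑' j, ℓ (j+m)
          ≤ ∑' j : ℕ, (Λ + δ) * ((j:ℝ) + (m:ℝ) + 1) ^ (-p) := by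
            refine Summable.tsum_le_tsum (fun j => ?_) hsum1 ((summable_shift_rpow hp m).mul_left _)
            have := hJ (j+m) (le_trans hmJ (Nat.le_add_left _ _))
            convert this using 3
            rfl
            push_cast; ring
        _ = (Λ + δ) * ∑' j : ℕ, ((j:ℝ) + (m:ℝ) + 1) ^ (-p) :=
            (summable_shift_rpow hp m).tsum_mul_left _
        _ ≤ (Λ + δ) * ((m:ℝ)^(1-p)/(p-1)) :=
            mul_le_mul_of_nonneg_left (tail_rpow_upper hp hm1') (by linarith)
    have hone : (m:ℝ)^(1-p) * (m:ℝ)^(p-1) = 1 := by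
      rw [← Real.rpow_add hm0]; norm_num
    have : (∑' j, ℓ (j+m)) * (m:ℝ)^(p-1) ≤ (Λ + δ)/(p-1) := by
      calc (∑' j, ℓ (j+m)) * (m:ℝ)^(p-1)
          ≤ (Λ + δ) * ((m:ℝ)^(1-p)/(p-1)) * (m:ℝ)^(p-1) :=
            mul_le_mul_of_nonneg_right hstep (by positivity)
        _ = (Λ + δ)/(p-1) * ((m:ℝ)^(1-p) * (m:ℝ)^(p-1)) := by ring
        _ = (Λ + δ)/(p-1) := by rw [hone, mul_one]
    linarith

lemma count_of_seq (h : IsFractalString ℓ) {D c : ℝ} (hD : 0 < D) (hc : 0 < c)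
    (hseq : Tendsto (fun j : ℕ => ℓ j ^ D * ((j:ℝ)+1)) atTop (𝓝 c)) :
    Tendsto (fun t : ℝ => t ^ D * (nnFS ℓ t : ℝ)) (𝓝[>] (0:ℝ)) (𝓝 c) := by
  rw [tendsto_order]
  constructor
  · intro a ha
    rcases lt_or_ge a 0 with ha0 | ha0
    · filter_upwards [self_mem_nhdsWithin] with t ht
      have : (0:ℝ) ≤ t ^ D * (nnFS ℓ t : ℝ) :=
        mul_nonneg (Real.rpow_nonneg (le_of_lt ht) D) (Nat.cast_nonneg _)
      linarith
    · set a' : ℝ := (a + c)/2 with ha'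
      have haa' : a < a' := by simp only [ha']; linarith
      have ha'c : a' < c := by simp only [ha']; linarith
      -- find m₀ with a' * (m/(m+1)) > a for m ≥ m₀
      have hfrac : Tendsto (fun m : ℕ => a' * ((m:ℝ)/((m:ℝ)+1))) atTop (𝓝 a') := by
        have h1 : Tendsto (fun m : ℕ => (m:ℝ)/((m:ℝ)+1)) atTop (𝓝 1) :=
          tendsto_natCast_div_add_atTop 1
        simpa using tendsto_const_nhds.mul h1
      obtain ⟨m₀, hm₀⟩ := eventually_atTop.1 (hfrac.eventually (eventually_gt_nhds haa'))
      obtain ⟨J, hJ⟩ := eventually_atTop.1 (hseq.eventually (eventually_gt_nhds ha'c))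
      filter_upwards [(nnFS_tendsto h).eventually (eventually_ge_atTop (max J m₀)),
        self_mem_nhdsWithin] with t hm ht
      set m := nnFS ℓ t with hmdef
      have hlm : ℓ m < t := nnFS_lt h ht
      have htD : ℓ m ^ D ≤ t ^ D :=
        Real.rpow_le_rpow (h.1 m).le hlm.le hD.le
      have h1 : ℓ m ^ D * ((m:ℝ)+1) > a' := hJ m (le_trans (le_max_left _ _) hm)
      have h2 : a' * ((m:ℝ)/((m:ℝ)+1)) > a := hm₀ m (le_trans (le_max_right _ _) hm)
      have hm1 : (0:ℝ) < (m:ℝ)+1 := by positivity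
      have key : ℓ m ^ D * (m:ℝ) > a := by
        have : ℓ m ^ D * (m:ℝ) = (ℓ m ^ D * ((m:ℝ)+1)) * ((m:ℝ)/((m:ℝ)+1)) := by
          field_simp
        rw [this]
        calc (ℓ m ^ D * ((m:ℝ)+1)) * ((m:ℝ)/((m:ℝ)+1))
            ≥ a' * ((m:ℝ)/((m:ℝ)+1)) := by
              apply mul_le_mul_of_nonneg_right h1.le (by positivity)
          _ > a := h2
      calc a < ℓ m ^ D * (m:ℝ) := key
        _ ≤ t ^ D * (m:ℝ) := mul_le_mul_of_nonneg_right htD (by positivity)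
  · intro b hb
    obtain ⟨J, hJ⟩ := eventually_atTop.1 (hseq.eventually (eventually_lt_nhds hb))
    filter_upwards [(nnFS_tendsto h).eventually (eventually_ge_atTop (J+1)),
      self_mem_nhdsWithin] with t hm ht
    set m := nnFS ℓ t with hmdef
    have hm0 : 1 ≤ m := le_trans (Nat.le_add_left 1 J) hm
    have hpred : m - 1 + 1 = m := Nat.succ_pred_eq_of_pos hm0
    have hlt : m - 1 < m := Nat.pred_lt_of_lt hm0  -- maybe wrong name
    have htle : t ≤ ℓ (m-1) := nnFS_le hlt
    have htD : t ^ D ≤ ℓ (m-1) ^ D := Real.rpow_le_rpow (le_of_lt ht) htle hD.le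
    have hJm : J ≤ m - 1 := by omega
    have h1 : ℓ (m-1) ^ D * (((m-1:ℕ):ℝ)+1) < b := hJ (m-1) hJm
    have hcast : ((m:ℝ)) = ((m-1:ℕ):ℝ)+1 := by
      rw [← hpred]; push_cast; ring
    calc t ^ D * (m:ℝ) ≤ ℓ (m-1) ^ D * (m:ℝ) :=
          mul_le_mul_of_nonneg_right htD (by positivity)
      _ = ℓ (m-1) ^ D * (((m-1:ℕ):ℝ)+1) := by rw [hcast]
      _ < b := h1

lemma seq_of_count (h : IsFractalString ℓ) {D c : ℝ} (hD : 0 < D) (hc : 0 < c)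
    (hcount : Tendsto (fun t : ℝ => t ^ D * (nnFS ℓ t : ℝ)) (𝓝[>] (0:ℝ)) (𝓝 c)) :
    Tendsto (fun j : ℕ => ℓ j ^ D * ((j:ℝ)+1)) atTop (𝓝 c) := by
  rw [tendsto_order]
  constructor
  · intro a ha
    rcases lt_or_ge a 0 with ha0 | ha0
    · refine Eventually.of_forall fun j => ?_
      have : (0:ℝ) < ℓ j ^ D * ((j:ℝ)+1) := by
        have := h.1 j; positivity
      linarith
    · set a' : ℝ := (a + c)/2 with ha'
      have haa' : a < a' := by simp only [ha']; linarith
      have ha'c : a' < c := by simp only [ha']; linarith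
      have ha'0 : 0 < a' := by linarith
      -- choose s > 1 with a'/s^D > a
      have hs_exists : ∃ s : ℝ, 1 < s ∧ a' / s ^ D > a := by
        have hcont : Tendsto (fun s : ℝ => a' / s ^ D) (𝓝[>] (1:ℝ)) (𝓝 a') := by
          have h1 : Tendsto (fun s : ℝ => s ^ D) (𝓝[>] (1:ℝ)) (𝓝 1) := by
            have := (Real.continuousAt_rpow_const 1 D (Or.inl one_ne_zero)).tendsto
            simp only [Real.one_rpow] at this
            exact this.mono_left nhdsWithin_le_nhds
          have := tendsto_const_nhds (x := a') (f := 𝓝[>] (1:ℝ)) |>.div h1 one_ne_zero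
          rw [div_one] at this
          exact this
        have := hcont.eventually (eventually_gt_nhds haa')
        obtain ⟨s, hs1, hs2⟩ := (this.and self_mem_nhdsWithin).exists
        exact ⟨s, hs2, hs1⟩
      obtain ⟨s, hs1, hsa⟩ := hs_exists
      have hs0 : (0:ℝ) < s := by linarith
      have hsD : (0:ℝ) < s ^ D := Real.rpow_pos_of_pos hs0 D
      -- compose hcount with j ↦ s * ℓ j
      have hcomp : Tendsto (fun j : ℕ => (s * ℓ j) ^ D * (nnFS ℓ (s * ℓ j) : ℝ))
          atTop (𝓝 c) := by
        apply hcount.comp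
        refine tendsto_nhdsWithin_iff.2 ⟨?_, Eventually.of_forall fun j => ?_⟩
        · have := (fs_tendsto_zero h).const_mul s
          simpa using this
        · exact mul_pos hs0 (h.1 j)
      filter_upwards [hcomp.eventually (eventually_gt_nhds ha'c)] with j hj
      have hnle : nnFS ℓ (s * ℓ j) ≤ j := by
        apply Nat.sInf_le
        have : ℓ j < s * ℓ j := by nlinarith [h.1 j]
        exact this
      have hstep : (s * ℓ j) ^ D * (j:ℝ) > a' := by
        calc (s * ℓ j) ^ D * (j:ℝ) ≥ (s * ℓ j) ^ D * (nnFS ℓ (s * ℓ j) : ℝ) := by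
              apply mul_le_mul_of_nonneg_left (Nat.cast_le.2 hnle)
                (Real.rpow_nonneg (by nlinarith [h.1 j]) D)
          _ > a' := hj
      have hmul : (s * ℓ j) ^ D = s ^ D * ℓ j ^ D :=
        Real.mul_rpow hs0.le (h.1 j).le
      have hj' : ℓ j ^ D * (j:ℝ) > a' / s ^ D := by
        rw [gt_iff_lt, div_lt_iff₀ hsD]
        nlinarith [hstep, hmul]
      have : ℓ j ^ D * ((j:ℝ)+1) ≥ ℓ j ^ D * (j:ℝ) := by
        apply mul_le_mul_of_nonneg_left (by linarith)
          (Real.rpow_nonneg (h.1 j).le D)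
      linarith
  · intro b hb
    have hcomp : Tendsto (fun j : ℕ => (ℓ j) ^ D * (nnFS ℓ (ℓ j) : ℝ)) atTop (𝓝 c) :=
      hcount.comp (fs_tendsto_zero' h)
    filter_upwards [hcomp.eventually (eventually_lt_nhds hb)] with j hj
    have hnge : (j:ℝ) + 1 ≤ (nnFS ℓ (ℓ j) : ℝ) := by
      have : j < nnFS ℓ (ℓ j) := by
        by_contra hc'
        push_neg at hc'
        exact absurd (nnFS_lt_of_le h (h.1 j) hc') (lt_irrefl _)
      exact_mod_cast Nat.succ_le_of_lt this
    calc ℓ j ^ D * ((j:ℝ)+1) ≤ ℓ j ^ D * (nnFS ℓ (ℓ j) : ℝ) :=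
          mul_le_mul_of_nonneg_left hnge (Real.rpow_nonneg (h.1 j).le D)
      _ < b := hj

lemma mink_of_seq (h : IsFractalString ℓ) {D Λ : ℝ} (hD0 : 0 < D) (hD1 : D < 1) (hΛ : 0 < Λ)
    (hl : Tendsto (fun j : ℕ => ℓ j * ((j:ℝ)+1)^(1/D)) atTop (𝓝 Λ)) :
    MinkMeasurableWith ℓ D (2^(1-D) * Λ^D / (1-D)) := by
  have hDne : D ≠ 0 := hD0.ne'
  have h1D : (0:ℝ) < 1 - D := by linarith
  set p : ℝ := 1/D with hpdef
  have hp : 1 < p := by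
    rw [hpdef]
    rw [lt_div_iff₀ hD0]
    linarith
  -- sequence in power D form
  have hseq : Tendsto (fun j : ℕ => ℓ j ^ D * ((j:ℝ)+1)) atTop (𝓝 (Λ^D)) := by
    have := hl.rpow_const (p := D) (Or.inl hΛ.ne')
    refine this.congr fun j => ?_
    rw [Real.mul_rpow (h.1 j).le (Real.rpow_nonneg (by positivity) _),
      ← Real.rpow_mul (by positivity), one_div_mul_cancel hDne, Real.rpow_one]
  have hΛD : (0:ℝ) < Λ^D := Real.rpow_pos_of_pos hΛ D
  have hcount := count_of_seq h hD0 hΛD hseq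
  -- maps
  have hmap2 : Tendsto (fun ε : ℝ => 2*ε) (𝓝[>] (0:ℝ)) (𝓝[>] (0:ℝ)) := by
    refine tendsto_nhdsWithin_iff.2 ⟨?_, ?_⟩
    · have : Tendsto (fun ε : ℝ => 2*ε) (𝓝 (0:ℝ)) (𝓝 (2*0)) :=
        (continuous_const.mul continuous_id).tendsto 0
      simpa using this.mono_left nhdsWithin_le_nhds
    · filter_upwards [self_mem_nhdsWithin] with ε hε
      have : (0:ℝ) < ε := hε
      simp only [Set.mem_Ioi]; linarith
  have hN : Tendsto (fun ε : ℝ => nnFS ℓ (2*ε)) (𝓝[>] (0:ℝ)) atTop :=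
    (nnFS_tendsto h).comp hmap2
  have hcount2 : Tendsto (fun ε : ℝ => (2*ε)^D * (nnFS ℓ (2*ε) : ℝ)) (𝓝[>] (0:ℝ))
      (𝓝 (Λ^D)) := hcount.comp hmap2
  have htail := tail_asymp h hp hΛ hl
  have htail2 : Tendsto (fun ε : ℝ => (∑' j, ℓ (j + nnFS ℓ (2*ε))) * ((nnFS ℓ (2*ε) : ℝ))^(p-1))
      (𝓝[>] (0:ℝ)) (𝓝 (Λ/(p-1))) := htail.comp hN
  have hpow : Tendsto (fun ε : ℝ => ((2*ε)^D * (nnFS ℓ (2*ε) : ℝ)) ^ ((D-1)/D))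
      (𝓝[>] (0:ℝ)) (𝓝 (Λ^(D-1))) := by
    have := hcount2.rpow_const (p := (D-1)/D) (Or.inl hΛD.ne')
    have heq : (Λ^D) ^ ((D-1)/D) = Λ^(D-1) := by
      rw [← Real.rpow_mul hΛ.le]
      congr 1
      field_simp
    rwa [heq] at this
  -- the combined limit
  have hcomb : Tendsto (fun ε : ℝ =>
      2^(1-D) * ((2*ε)^D * (nnFS ℓ (2*ε) : ℝ))
      + ((∑' j, ℓ (j + nnFS ℓ (2*ε))) * ((nnFS ℓ (2*ε) : ℝ))^(p-1))
        * (2^(1-D) * ((2*ε)^D * (nnFS ℓ (2*ε) : ℝ)) ^ ((D-1)/D)))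
      (𝓝[>] (0:ℝ))
      (𝓝 (2^(1-D) * Λ^D + (Λ/(p-1)) * (2^(1-D) * Λ^(D-1)))) :=
    (tendsto_const_nhds.mul hcount2).add (htail2.mul (tendsto_const_nhds.mul hpow))
  -- limit value equals the target
  have hval : 2^(1-D) * Λ^D + (Λ/(p-1)) * (2^(1-D) * Λ^(D-1)) = 2^(1-D) * Λ^D / (1-D) := by
    have hΛΛ : Λ * Λ^(D-1) = Λ^D := by
      nth_rewrite 1 [← Real.rpow_one Λ]
      rw [← Real.rpow_add hΛ]
      norm_num
    have hp1 : p - 1 = (1-D)/D := by rw [hpdef]; field_simp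
    rw [hp1, ← hΛΛ]
    field_simp
    ring
  rw [MinkMeasurableWith]
  rw [← hval]
  refine hcomb.congr' ?_
  filter_upwards [self_mem_nhdsWithin, hN.eventually (eventually_ge_atTop 1)]
    with ε hε hNε
  have hε0 : (0:ℝ) < ε := hε
  set N := nnFS ℓ (2*ε) with hNdef
  have hN0 : (0:ℝ) < (N:ℝ) := by exact_mod_cast hNε
  have hvol := vol_eq h hε0
  rw [hvol]
  have hεD : ε ^ (1-D) ≠ 0 := (Real.rpow_pos_of_pos hε0 _).ne'
  rw [eq_div_iff hεD]
  have h2εD : (2*ε)^D = 2^D * ε^D := Real.mul_rpow (by norm_num) hε0.le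
  -- first term
  have hterm1 : 2^(1-D) * ((2*ε)^D * (N:ℝ)) * ε^(1-D) = 2 * ε * (N:ℝ) := by
    rw [h2εD]
    have : (2:ℝ)^(1-D) * 2^D = 2 := by
      rw [← Real.rpow_add (by norm_num : (0:ℝ) < 2)]; norm_num
    have hεε : ε^D * ε^(1-D) = ε := by
      rw [← Real.rpow_add hε0]; norm_num
    calc 2^(1-D) * (2^D * ε^D * (N:ℝ)) * ε^(1-D)
        = (2^(1-D) * 2^D) * (ε^D * ε^(1-D)) * (N:ℝ) := by ring
      _ = 2 * ε * (N:ℝ) := by rw [this, hεε]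
  -- second term
  have hterm2 : ((∑' j, ℓ (j + N)) * ((N:ℝ))^(p-1))
      * (2^(1-D) * ((2*ε)^D * (N:ℝ)) ^ ((D-1)/D)) * ε^(1-D) = ∑' j, ℓ (j + N) := by
    have hNpow : ((2*ε)^D * (N:ℝ)) ^ ((D-1)/D) = (2*ε)^(D-1) * (N:ℝ)^((D-1)/D) := by
      rw [Real.mul_rpow (Real.rpow_nonneg (by linarith) _) hN0.le,
        ← Real.rpow_mul (by linarith : (0:ℝ) ≤ 2*ε)]
      congr 2
      field_simp
    have hNone : ((N:ℝ))^(p-1) * (N:ℝ)^((D-1)/D) = 1 := by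
      rw [← Real.rpow_add hN0]
      have : p - 1 + (D-1)/D = 0 := by rw [hpdef]; field_simp; ring
      rw [this, Real.rpow_zero]
    have h2e : (2:ℝ)^(1-D) * (2*ε)^(D-1) * ε^(1-D) = 1 := by
      have h2ε1 : (2*ε)^(D-1) = 2^(D-1) * ε^(D-1) := Real.mul_rpow (by norm_num) hε0.le
      rw [h2ε1]
      have ha : (2:ℝ)^(1-D) * 2^(D-1) = 1 := by
        rw [← Real.rpow_add (by norm_num : (0:ℝ) < 2)]; norm_num
      have hb : ε^(D-1) * ε^(1-D) = 1 := by
        rw [← Real.rpow_add hε0]; norm_num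
      calc (2:ℝ)^(1-D) * (2^(D-1) * ε^(D-1)) * ε^(1-D)
          = ((2:ℝ)^(1-D) * 2^(D-1)) * (ε^(D-1) * ε^(1-D)) := by ring
        _ = 1 := by rw [ha, hb]; norm_num
    calc ((∑' j, ℓ (j + N)) * ((N:ℝ))^(p-1))
        * (2^(1-D) * ((2*ε)^D * (N:ℝ)) ^ ((D-1)/D)) * ε^(1-D)
        = (∑' j, ℓ (j + N)) * (((N:ℝ))^(p-1) * (N:ℝ)^((D-1)/D))
          * (2^(1-D) * (2*ε)^(D-1) * ε^(1-D)) := by rw [hNpow]; ring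
      _ = ∑' j, ℓ (j + N) := by rw [hNone, h2e]; ring
  calc (2^(1-D) * ((2*ε)^D * (N:ℝ))
      + ((∑' j, ℓ (j + N)) * ((N:ℝ))^(p-1))
        * (2^(1-D) * ((2*ε)^D * (N:ℝ)) ^ ((D-1)/D))) * ε^(1-D)
      = 2^(1-D) * ((2*ε)^D * (N:ℝ)) * ε^(1-D)
        + ((∑' j, ℓ (j + N)) * ((N:ℝ))^(p-1))
          * (2^(1-D) * ((2*ε)^D * (N:ℝ)) ^ ((D-1)/D)) * ε^(1-D) := by ring
    _ = 2 * ε * (N:ℝ) + ∑' j, ℓ (j + N) := by rw [hterm1, hterm2]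

lemma mul_map_nhdsGT {c : ℝ} (hc : 0 < c) :
    Tendsto (fun ε : ℝ => c*ε) (𝓝[>] (0:ℝ)) (𝓝[>] (0:ℝ)) := by
  refine tendsto_nhdsWithin_iff.2 ⟨?_, ?_⟩
  · have : Tendsto (fun ε : ℝ => c*ε) (𝓝 (0:ℝ)) (𝓝 (c*0)) :=
      (continuous_const.mul continuous_id).tendsto 0
    simpa using this.mono_left nhdsWithin_le_nhds
  · filter_upwards [self_mem_nhdsWithin] with ε hε
    have : (0:ℝ) < ε := hε
    exact mul_pos hc this

lemma vol_diff_lower (h : IsFractalString ℓ) {ε θ : ℝ} (hε : 0 < ε) (hθ : 0 < θ)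
    (hθ1 : θ < 1) :
    2*ε*(1-θ)*(nnFS ℓ (2*ε) : ℝ) ≤ stringVol ℓ ε - stringVol ℓ (θ*ε) := by
  have hθε : 0 < θ*ε := mul_pos hθ hε
  have hs1 := summable_min h (by linarith : (0:ℝ) ≤ 2*ε) (ℓ := ℓ)
  have hs2 := summable_min h (by positivity : (0:ℝ) ≤ 2*(θ*ε)) (ℓ := ℓ)
  have hdiff : stringVol ℓ ε - stringVol ℓ (θ*ε)
      = ∑' j, (min (ℓ j) (2*ε) - min (ℓ j) (2*(θ*ε))) := (Summable.tsum_sub hs1 hs2).symm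
  rw [hdiff]
  have hterm : ∀ j ∈ Finset.range (nnFS ℓ (2*ε)),
      min (ℓ j) (2*ε) - min (ℓ j) (2*(θ*ε)) = 2*ε - 2*(θ*ε) := by
    intro j hj
    have hℓj : 2*ε ≤ ℓ j := nnFS_le (Finset.mem_range.1 hj)
    rw [min_eq_right hℓj, min_eq_right (by nlinarith)]
  calc 2*ε*(1-θ)*(nnFS ℓ (2*ε) : ℝ)
      = ∑ j ∈ Finset.range (nnFS ℓ (2*ε)), (min (ℓ j) (2*ε) - min (ℓ j) (2*(θ*ε))) := by
        rw [Finset.sum_congr rfl hterm, Finset.sum_const, Finset.card_range, nsmul_eq_mul]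
        ring
    _ ≤ ∑' j, (min (ℓ j) (2*ε) - min (ℓ j) (2*(θ*ε))) := by
        refine Summable.sum_le_tsum _ (fun j _ => ?_) (hs1.sub hs2)
        have : min (ℓ j) (2*(θ*ε)) ≤ min (ℓ j) (2*ε) :=
          min_le_min (le_refl _) (by nlinarith)
        linarith

lemma vol_diff_upper (h : IsFractalString ℓ) {ε θ : ℝ} (hε : 0 < ε) (hθ : 0 < θ)
    (hθ1 : θ < 1) :
    stringVol ℓ ε - stringVol ℓ (θ*ε) ≤ 2*ε*(1-θ)*(nnFS ℓ (2*(θ*ε)) : ℝ) := by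
  have hθε : 0 < θ*ε := mul_pos hθ hε
  have hs1 := summable_min h (by linarith : (0:ℝ) ≤ 2*ε) (ℓ := ℓ)
  have hs2 := summable_min h (by positivity : (0:ℝ) ≤ 2*(θ*ε)) (ℓ := ℓ)
  have hdiff : stringVol ℓ ε - stringVol ℓ (θ*ε)
      = ∑' j, (min (ℓ j) (2*ε) - min (ℓ j) (2*(θ*ε))) := (Summable.tsum_sub hs1 hs2).symm
  rw [hdiff]
  set g : ℕ → ℝ := fun j => if j ∈ Finset.range (nnFS ℓ (2*(θ*ε))) then 2*ε - 2*(θ*ε) else 0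
    with hg
  have hgsum : Summable g := summable_of_ne_finset_zero
    (s := Finset.range (nnFS ℓ (2*(θ*ε)))) (fun j hj => if_neg hj)
  have hle : ∀ j, min (ℓ j) (2*ε) - min (ℓ j) (2*(θ*ε)) ≤ g j := by
    intro j
    by_cases hj : j ∈ Finset.range (nnFS ℓ (2*(θ*ε)))
    · rw [hg]; simp only [if_pos hj]
      have h1 : min (ℓ j) (2*ε) ≤ 2*ε := min_le_right _ _
      have h2 : 2*(θ*ε) ≥ min (ℓ j) (2*(θ*ε)) := min_le_right _ _
      rcases le_total (ℓ j) (2*(θ*ε)) with hc | hc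
      · rw [min_eq_left hc, min_eq_left (by nlinarith)]; nlinarith
      · rw [min_eq_right hc]; nlinarith [min_le_right (ℓ j) (2*ε)]
    · rw [hg]; simp only [if_neg hj]
      have hjge : nnFS ℓ (2*(θ*ε)) ≤ j := by
        simpa [Finset.mem_range, not_lt] using hj
      have : ℓ j < 2*(θ*ε) := nnFS_lt_of_le h (by positivity) hjge
      rw [min_eq_left this.le, min_eq_left (by nlinarith)]
      simp
  calc ∑' j, (min (ℓ j) (2*ε) - min (ℓ j) (2*(θ*ε)))
      ≤ ∑' j, g j := Summable.tsum_le_tsum hle (hs1.sub hs2) hgsum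
    _ = ∑ j ∈ Finset.range (nnFS ℓ (2*(θ*ε))), g j :=
        tsum_eq_sum (fun j hj => if_neg hj)
    _ = 2*ε*(1-θ)*(nnFS ℓ (2*(θ*ε)) : ℝ) := by
        rw [Finset.sum_congr rfl (fun j hj => if_pos hj), Finset.sum_const,
          Finset.card_range, nsmul_eq_mul]
        ring

lemma slope_limit {D : ℝ} (hD0 : 0 < D) (hD1 : D < 1) :
    Tendsto (fun θ : ℝ => (1 - θ^(1-D))/(1-θ)) (𝓝[<] (1:ℝ)) (𝓝 (1-D)) := by
  have hder : HasDerivAt (fun θ : ℝ => θ^(1-D)) (1-D) 1 := by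
    have := Real.hasDerivAt_rpow_const (x := (1:ℝ)) (p := 1-D) (Or.inl one_ne_zero)
    simpa using this
  have := hasDerivAt_iff_tendsto_slope.1 hder
  have h2 : Tendsto (slope (fun θ : ℝ => θ^(1-D)) 1) (𝓝[<] (1:ℝ)) (𝓝 (1-D)) :=
    this.mono_left (nhdsWithin_mono _ (fun x hx => ne_of_lt hx))
  refine h2.congr' ?_
  filter_upwards [self_mem_nhdsWithin] with θ hθ
  have hθ1 : θ ≠ 1 := ne_of_lt hθ
  rw [slope_def_field]
  rw [div_eq_div_iff (sub_ne_zero.2 hθ1) (sub_ne_zero.2 (Ne.symm hθ1))]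
  simp [Real.one_rpow]
  ring

lemma count_of_mink (h : IsFractalString ℓ) {D M : ℝ} (hD0 : 0 < D) (hD1 : D < 1)
    (hM : MinkMeasurableWith ℓ D M) :
    Tendsto (fun t : ℝ => t^D * (nnFS ℓ t : ℝ)) (𝓝[>] (0:ℝ)) (𝓝 (2^(D-1)*((1-D)*M))) := by
  set L : ℝ := (1-D)*M/2 with hLdef
  -- first, the ε-form
  have hmain : Tendsto (fun ε : ℝ => ε^D * (nnFS ℓ (2*ε) : ℝ)) (𝓝[>] (0:ℝ)) (𝓝 L) := by
    -- for θ ∈ (0,1), the ratio R θ ε tends to M*(1-θ^(1-D))/(2*(1-θ))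
    have hR : ∀ θ : ℝ, 0 < θ → θ < 1 →
        Tendsto (fun ε : ℝ => (stringVol ℓ ε - stringVol ℓ (θ*ε))/(2*(1-θ)*ε^(1-D)))
          (𝓝[>] (0:ℝ)) (𝓝 (M*(1-θ^(1-D))/(2*(1-θ)))) := by
      intro θ hθ0 hθ1
      have hcomp : Tendsto (fun ε : ℝ => stringVol ℓ (θ*ε) / (θ*ε)^(1-D))
          (𝓝[>] (0:ℝ)) (𝓝 M) := hM.comp (mul_map_nhdsGT hθ0)
      have hcombo : Tendsto (fun ε : ℝ =>
          (stringVol ℓ ε / ε^(1-D) - θ^(1-D) * (stringVol ℓ (θ*ε) / (θ*ε)^(1-D))) / (2*(1-θ)))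
          (𝓝[>] (0:ℝ)) (𝓝 ((M - θ^(1-D)*M)/(2*(1-θ)))) :=
        (hM.sub (tendsto_const_nhds.mul hcomp)).div_const _
      have hval : (M - θ^(1-D)*M)/(2*(1-θ)) = M*(1-θ^(1-D))/(2*(1-θ)) := by ring
      rw [hval] at hcombo
      refine hcombo.congr' ?_
      filter_upwards [self_mem_nhdsWithin] with ε hε
      have hε0 : (0:ℝ) < ε := hε
      have hθε : (0:ℝ) < θ*ε := mul_pos hθ0 hε0
      have hpow : (θ*ε)^(1-D) = θ^(1-D) * ε^(1-D) := Real.mul_rpow hθ0.le hε0.le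
      have hεD : (0:ℝ) < ε^(1-D) := Real.rpow_pos_of_pos hε0 _
      have hθD : (0:ℝ) < θ^(1-D) := Real.rpow_pos_of_pos hθ0 _
      rw [hpow]
      have h1θ : (0:ℝ) < 1-θ := by linarith
      have hεD : (0:ℝ) < ε^(1-D) := Real.rpow_pos_of_pos hε0 _
      field_simp
    -- the limiting constant as θ → 1⁻
    have hgθ : Tendsto (fun θ : ℝ => M*(1-θ^(1-D))/(2*(1-θ))) (𝓝[<] (1:ℝ)) (𝓝 L) := by
      have := (slope_limit hD0 hD1).const_mul (M/2)
      have hval : M/2*(1-D) = L := by rw [hLdef]; ring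
      rw [hval] at this
      refine this.congr fun θ => ?_
      rw [div_mul_div_comm]
    rw [tendsto_order]
    constructor
    · -- lower bound
      intro a ha
      have hθD1 : Tendsto (fun θ : ℝ => θ^D * (M*(1-θ^(1-D))/(2*(1-θ)))) (𝓝[<] (1:ℝ))
          (𝓝 L) := by
        have h1 : Tendsto (fun θ : ℝ => θ^D) (𝓝[<] (1:ℝ)) (𝓝 1) := by
          have := (Real.continuousAt_rpow_const 1 D (Or.inl one_ne_zero)).tendsto
          simp only [Real.one_rpow] at this
          exact this.mono_left nhdsWithin_le_nhds
        simpa using h1.mul hgθ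
      obtain ⟨θ, hθa, hθmem⟩ := ((hθD1.eventually (eventually_gt_nhds ha)).and
        (Ioo_mem_nhdsLT one_pos)).exists
      have hθ0 : 0 < θ := hθmem.1
      have hθ1 : θ < 1 := hθmem.2
      have hRθ := hR θ hθ0 hθ1
      have hev : ∀ᶠ ε in 𝓝[>] (0:ℝ),
          a < θ^D * ((stringVol ℓ ε - stringVol ℓ (θ*ε))/(2*(1-θ)*ε^(1-D))) :=
        (tendsto_const_nhds.mul hRθ).eventually (eventually_gt_nhds hθa)
      have hstep : ∀ᶠ ε in 𝓝[>] (0:ℝ), a < (θ*ε)^D * (nnFS ℓ (2*(θ*ε)) : ℝ) := by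
        filter_upwards [hev, self_mem_nhdsWithin] with ε hε1 hε2
        have hε0 : (0:ℝ) < ε := hε2
        have hub := vol_diff_upper h hε0 hθ0 hθ1
        have hεD : (0:ℝ) < ε^(1-D) := Real.rpow_pos_of_pos hε0 _
        have h2θ : (0:ℝ) < 2*(1-θ)*ε^(1-D) :=
          mul_pos (mul_pos two_pos (by linarith)) hεD
        have hratio : (stringVol ℓ ε - stringVol ℓ (θ*ε))/(2*(1-θ)*ε^(1-D))
            ≤ ε^D * (nnFS ℓ (2*(θ*ε)) : ℝ) := by
          rw [div_le_iff₀ h2θ]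
          have hεε : ε^D * ε^(1-D) = ε := by
            rw [← Real.rpow_add hε0]; norm_num
          calc stringVol ℓ ε - stringVol ℓ (θ*ε)
              ≤ 2*ε*(1-θ)*(nnFS ℓ (2*(θ*ε)) : ℝ) := hub
            _ = ε^D * (nnFS ℓ (2*(θ*ε)) : ℝ) * (2*(1-θ)*ε^(1-D)) := by
                rw [show ε^D * (nnFS ℓ (2*(θ*ε)) : ℝ) * (2*(1-θ)*ε^(1-D))
                  = (ε^D * ε^(1-D)) * (2*(1-θ)) * (nnFS ℓ (2*(θ*ε)) : ℝ) by ring, hεε]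
                ring
        have hmulpow : (θ*ε)^D = θ^D * ε^D := Real.mul_rpow hθ0.le hε0.le
        have hθDpos : (0:ℝ) < θ^D := Real.rpow_pos_of_pos hθ0 _
        calc a < θ^D * ((stringVol ℓ ε - stringVol ℓ (θ*ε))/(2*(1-θ)*ε^(1-D))) := hε1
          _ ≤ θ^D * (ε^D * (nnFS ℓ (2*(θ*ε)) : ℝ)) :=
              mul_le_mul_of_nonneg_left hratio hθDpos.le
          _ = (θ*ε)^D * (nnFS ℓ (2*(θ*ε)) : ℝ) := by rw [hmulpow]; ring
      -- transfer along u ↦ u/θ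
      have hmapθ : Tendsto (fun u : ℝ => (1/θ)*u) (𝓝[>] (0:ℝ)) (𝓝[>] (0:ℝ)) :=
        mul_map_nhdsGT (by positivity)
      have := hmapθ.eventually hstep
      filter_upwards [this] with u hu
      have : θ*((1/θ)*u) = u := by field_simp
      rwa [this] at hu
    · -- upper bound
      intro b hb
      obtain ⟨θ, hθb, hθmem⟩ := ((hgθ.eventually (eventually_lt_nhds hb)).and
        (Ioo_mem_nhdsLT one_pos)).exists
      have hθ0 : 0 < θ := hθmem.1
      have hθ1 : θ < 1 := hθmem.2
      have hRθ := hR θ hθ0 hθ1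
      filter_upwards [hRθ.eventually (eventually_lt_nhds hθb), self_mem_nhdsWithin]
        with ε hε1 hε2
      have hε0 : (0:ℝ) < ε := hε2
      have hlb := vol_diff_lower h hε0 hθ0 hθ1
      have hεD : (0:ℝ) < ε^(1-D) := Real.rpow_pos_of_pos hε0 _
      have h2θ : (0:ℝ) < 2*(1-θ)*ε^(1-D) :=
        mul_pos (mul_pos two_pos (by linarith)) hεD
      have hεε : ε^D * ε^(1-D) = ε := by
        rw [← Real.rpow_add hε0]; norm_num
      have : ε^D * (nnFS ℓ (2*ε) : ℝ)
          ≤ (stringVol ℓ ε - stringVol ℓ (θ*ε))/(2*(1-θ)*ε^(1-D)) := by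
        rw [le_div_iff₀ h2θ]
        calc ε^D * (nnFS ℓ (2*ε) : ℝ) * (2*(1-θ)*ε^(1-D))
            = (ε^D * ε^(1-D)) * (2*(1-θ)) * (nnFS ℓ (2*ε) : ℝ) := by ring
          _ = 2*ε*(1-θ)*(nnFS ℓ (2*ε) : ℝ) := by rw [hεε]; ring
          _ ≤ stringVol ℓ ε - stringVol ℓ (θ*ε) := hlb
      linarith
  -- now convert to the t-form
  have hmap : Tendsto (fun t : ℝ => (1/2)*t) (𝓝[>] (0:ℝ)) (𝓝[>] (0:ℝ)) :=
    mul_map_nhdsGT (by norm_num)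
  have := (hmain.comp hmap).const_mul ((2:ℝ)^D)
  have hval : (2:ℝ)^D * L = 2^(D-1)*((1-D)*M) := by
    rw [hLdef]
    rw [show (2:ℝ)^(D-1) = 2^D * 2^(-1:ℝ) by
      rw [← Real.rpow_add (by norm_num : (0:ℝ) < 2)]; ring_nf]
    rw [Real.rpow_neg_one]
    ring
  rw [hval] at this
  refine this.congr' ?_
  filter_upwards [self_mem_nhdsWithin] with t ht
  have ht0 : (0:ℝ) < t := ht
  have h1 : (2:ℝ)*((1/2)*t) = t := by ring
  have h2 : ((1/2)*t)^D = 2^(-D) * t^D := by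
    rw [show (1/2)*t = 2⁻¹ * t by norm_num, Real.mul_rpow (by norm_num) ht0.le,
      ← Real.rpow_neg_one (2:ℝ), ← Real.rpow_mul (by norm_num)]
    norm_num
  show (2:ℝ)^D * (((1/2)*t)^D * (nnFS ℓ (2*((1/2)*t)) : ℝ)) = t^D * (nnFS ℓ t : ℝ)
  rw [h1, h2, ← mul_assoc, ← mul_assoc, ← Real.rpow_add (by norm_num : (0:ℝ) < 2)]
  norm_num

/-- (Characterization of Minkowski measurability, Lapidus–Pomerance)
A fractal string of dimension `D ∈ (0,1)` is Minkowski measurable iff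
`ℓ_j j^{1/D} → Λ` for some `Λ ∈ (0,∞)`; in that case `M = 2^{1-D} Λ^D/(1-D)`. -/
theorem minkMeasurable_iff (ℓ : ℕ → ℝ) (h : IsFractalString ℓ) (D : ℝ)
    (hD : D ∈ Set.Ioo (0:ℝ) 1) (hdim : minkDim ℓ = D) :
    (MinkMeasurable ℓ D ↔
      ∃ Λ : ℝ, 0 < Λ ∧
        Tendsto (fun j : ℕ => ℓ j * ((j : ℝ) + 1) ^ (1 / D)) atTop (𝓝 Λ)) ∧
    (∀ Λ : ℝ, 0 < Λ →
      Tendsto (fun j : ℕ => ℓ j * ((j : ℝ) + 1) ^ (1 / D)) atTop (𝓝 Λ) →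
      MinkMeasurableWith ℓ D (2 ^ (1 - D) * Λ ^ D / (1 - D))) := by
  obtain ⟨hD0, hD1⟩ := hD
  have hDne : D ≠ 0 := hD0.ne'
  have hMpos : ∀ Λ : ℝ, 0 < Λ → 0 < 2 ^ (1 - D) * Λ ^ D / (1 - D) := by
    intro Λ hΛ0
    apply div_pos (mul_pos (Real.rpow_pos_of_pos two_pos _)
      (Real.rpow_pos_of_pos hΛ0 _)) (by linarith)
  constructor
  · constructor
    · rintro ⟨M, hM0, hMw⟩
      have hcount := count_of_mink h hD0 hD1 hMw
      set c : ℝ := 2^(D-1)*((1-D)*M) with hc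
      have hc0 : 0 < c := mul_pos (Real.rpow_pos_of_pos two_pos _)
        (mul_pos (by linarith) hM0)
      have hseq := seq_of_count h hD0 hc0 hcount
      refine ⟨c^(1/D), Real.rpow_pos_of_pos hc0 _, ?_⟩
      have := hseq.rpow_const (p := 1/D) (Or.inl hc0.ne')
      refine this.congr fun j => ?_
      rw [Real.mul_rpow (Real.rpow_nonneg (h.1 j).le _) (by positivity),
        ← Real.rpow_mul (h.1 j).le, mul_one_div, div_self hDne, Real.rpow_one]
    · rintro ⟨Λ, hΛ0, hΛ⟩
      exact ⟨_, hMpos Λ hΛ0, mink_of_seq h hD0 hD1 hΛ0 hΛ⟩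
  · intro Λ hΛ0 hΛ
    exact mink_of_seq h hD0 hD1 hΛ0 hΛ
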